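/- If f is a finite Blaschke product of degree m and λ_1,...,λ_N are points of the unit disk, then the matrix with entries (1 - f(λ_i) conj(f(λ_j)))/(1 - λ_i conj(λ_j)) is positive semi-definite of rank at most m. -/

import Mathlib

open scoped ComplexOrder
open Complex Finset Matrix

noncomputable def bb (a z : ℂ) : ℂ := (z - a) / (1 - (starRingEnd ℂ) a * z)

lemma hden {a z : ℂ} (ha : ‖a‖ < 1) (hz : ‖z‖ < 1) :
    1 - (starRingEnd ℂ) a * z ≠ 0 := by
  intro h
  have h1 : (starRingEnd ℂ) a * z = 1 := by linear_combination -h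
  have := congrArg norm h1
  rw [norm_mul, norm_one, Complex.norm_conj] at this
  nlinarith [norm_nonneg a, norm_nonneg z]

lemma hden' {z w : ℂ} (hz : ‖z‖ < 1) (hw : ‖w‖ < 1) :
    1 - z * (starRingEnd ℂ) w ≠ 0 := by
  intro h
  have h1 : z * (starRingEnd ℂ) w = 1 := by linear_combination -h
  have := congrArg norm h1
  rw [norm_mul, norm_one, Complex.norm_conj] at this
  nlinarith [norm_nonneg z, norm_nonneg w]

noncomputable def qq (a : ℕ → ℂ) (k : ℕ) (z : ℂ) : ℂ :=
  (Real.sqrt (1 - ‖a k‖ ^ 2) : ℂ) *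
    (∏ j ∈ Finset.range k, bb (a j) z) / (1 - (starRingEnd ℂ) (a k) * z)

lemma one_sub_bb_mul {a z w : ℂ} (ha : ‖a‖ < 1) (hz : ‖z‖ < 1)
    (hw : ‖w‖ < 1) :
    1 - bb a z * (starRingEnd ℂ) (bb a w) =
      (1 - z * (starRingEnd ℂ) w) *
        ((1 - a * (starRingEnd ℂ) a) /
          ((1 - (starRingEnd ℂ) a * z) * (1 - a * (starRingEnd ℂ) w))) := by
  have h1 : 1 - (starRingEnd ℂ) a * z ≠ 0 := hden ha hz
  have h2' : 1 - a * (starRingEnd ℂ) w ≠ 0 := hden' ha hw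
  have h1c : 1 - z * (starRingEnd ℂ) a ≠ 0 := by rwa [mul_comm]
  simp only [bb, map_div₀, map_sub, _root_.map_mul, _root_.map_one, Complex.conj_conj]
  field_simp
  ring

lemma key (a : ℕ → ℂ) (z w : ℂ) (hz : ‖z‖ < 1) (hw : ‖w‖ < 1) :
    ∀ m : ℕ, (∀ k < m, ‖a k‖ < 1) →
    1 - (∏ k ∈ Finset.range m, bb (a k) z) *
        (starRingEnd ℂ) (∏ k ∈ Finset.range m, bb (a k) w)
      = (1 - z * (starRingEnd ℂ) w) *
          ∑ k ∈ Finset.range m, qq a k z * (starRingEnd ℂ) (qq a k w) := by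
  intro m
  induction m with
  | zero => simp
  | succ n ih =>
    intro hm
    have han : ‖a n‖ < 1 := hm n (Nat.lt_succ_self n)
    have ihn := ih (fun k hk => hm k (hk.trans (Nat.lt_succ_self n)))
    rw [Finset.prod_range_succ, Finset.prod_range_succ, Finset.sum_range_succ]
    set P := ∏ k ∈ Finset.range n, bb (a k) z with hP
    set Q := ∏ k ∈ Finset.range n, bb (a k) w with hQ
    have step : 1 - P * bb (a n) z * (starRingEnd ℂ) (Q * bb (a n) w)
        = (1 - P * (starRingEnd ℂ) Q) +
          P * (starRingEnd ℂ) Q * (1 - bb (a n) z * (starRingEnd ℂ) (bb (a n) w)) := by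
      simp only [_root_.map_mul]; ring
    rw [step, ihn, one_sub_bb_mul han hz hw]
    have hs : ((Real.sqrt (1 - ‖a n‖ ^ 2) : ℝ) : ℂ) *
        ((Real.sqrt (1 - ‖a n‖ ^ 2) : ℝ) : ℂ)
        = 1 - a n * (starRingEnd ℂ) (a n) := by
      rw [← Complex.ofReal_mul,
        Real.mul_self_sqrt (by nlinarith [norm_nonneg (a n)])]
      rw [Complex.mul_conj]
      push_cast [← Complex.sq_norm]
      ring
    have h1n : 1 - (starRingEnd ℂ) (a n) * z ≠ 0 := hden han hz
    have h2n : 1 - a n * (starRingEnd ℂ) w ≠ 0 := hden' han hw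
    have hq : qq a n z * (starRingEnd ℂ) (qq a n w)
        = P * (starRingEnd ℂ) Q *
            ((1 - a n * (starRingEnd ℂ) (a n)) /
              ((1 - (starRingEnd ℂ) (a n) * z) * (1 - a n * (starRingEnd ℂ) w))) := by
      simp only [qq, map_div₀, _root_.map_mul, map_sub, _root_.map_one, Complex.conj_conj,
        Complex.conj_ofReal]
      rw [← hP, ← hQ, ← hs]
      field_simp
    rw [hq]
    ring


/-- A finite Blaschke product with unimodular constant `c` and zeros `a k`. -/
noncomputable def blaschke {m : ℕ} (c : ℂ) (a : Fin m → ℂ) : ℂ → ℂ :=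
  fun z => c * ∏ k, (z - a k) / (1 - (starRingEnd ℂ) (a k) * z)

/-- The Pick matrix of f at the nodes l i. -/
noncomputable def pickMatrix {N : ℕ} (φ : ℂ → ℂ) (l : Fin N → ℂ) :
    Matrix (Fin N) (Fin N) ℂ :=
  Matrix.of fun i j => (1 - φ (l i) * star (φ (l j))) / (1 - l i * star (l j))

/-- for a finite Blaschke product f of degree m and distinct points
λ_1,…,λ_N ∈ 𝔻, the Pick matrix of f is positive semi-definite of rank at most m. -/
theorem stmt10 {m N : ℕ} (c : ℂ) (hc : ‖c‖ = 1)
    (a : Fin m → ℂ) (ha : ∀ k, ‖a k‖ < 1)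
    (l : Fin N → ℂ) (hl : ∀ i, ‖l i‖ < 1)
    (hinj : Function.Injective l) :
    (pickMatrix (blaschke c a) l).PosSemidef ∧ (pickMatrix (blaschke c a) l).rank ≤ m := by
  set a' : ℕ → ℂ := fun n => if h : n < m then a ⟨n, h⟩ else 0 with ha'def
  have ha' : ∀ k < m, ‖a' k‖ < 1 := by
    intro k hk
    simp only [ha'def, dif_pos hk]
    exact ha _
  have hprod : ∀ z, (∏ k : Fin m, (z - a k) / (1 - (starRingEnd ℂ) (a k) * z))
      = ∏ k ∈ Finset.range m, bb (a' k) z := by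
    intro z
    rw [← Fin.prod_univ_eq_prod_range]
    refine Finset.prod_congr rfl fun k _ => ?_
    simp [bb, a', k.isLt]
  set A : Matrix (Fin N) (Fin m) ℂ := Matrix.of fun i k => qq a' k (l i) with hA
  have hcc : c * (starRingEnd ℂ) c = 1 := by
    rw [Complex.mul_conj, Complex.normSq_eq_norm_sq, hc]
    norm_num
  have hM : pickMatrix (blaschke c a) l = A * Aᴴ := by
    ext i j
    have hz := hl i
    have hw := hl j
    have hne : 1 - l i * (starRingEnd ℂ) (l j) ≠ 0 := hden' hz hw
    have hkey := key a' (l i) (l j) hz hw m ha'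
    have hnum : 1 - blaschke c a (l i) * (starRingEnd ℂ) (blaschke c a (l j))
        = (1 - l i * (starRingEnd ℂ) (l j)) *
            ∑ k ∈ Finset.range m, qq a' k (l i) * (starRingEnd ℂ) (qq a' k (l j)) := by
      simp only [blaschke, hprod]
      calc 1 - c * (∏ k ∈ Finset.range m, bb (a' k) (l i)) *
              (starRingEnd ℂ) (c * ∏ k ∈ Finset.range m, bb (a' k) (l j))
          = (1 - (∏ k ∈ Finset.range m, bb (a' k) (l i)) *
              (starRingEnd ℂ) (∏ k ∈ Finset.range m, bb (a' k) (l j)))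
            - (c * (starRingEnd ℂ) c - 1) *
              ((∏ k ∈ Finset.range m, bb (a' k) (l i)) *
                (starRingEnd ℂ) (∏ k ∈ Finset.range m, bb (a' k) (l j))) := by
            rw [_root_.map_mul]; ring
        _ = _ := by rw [hcc, hkey]; ring
    have hLHS : pickMatrix (blaschke c a) l i j
        = ∑ k ∈ Finset.range m, qq a' k (l i) * (starRingEnd ℂ) (qq a' k (l j)) := by
      show (1 - blaschke c a (l i) * star (blaschke c a (l j))) / (1 - l i * star (l j))
        = _
      rw [show star (blaschke c a (l j)) = (starRingEnd ℂ) (blaschke c a (l j)) from rfl,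
        show star (l j) = (starRingEnd ℂ) (l j) from rfl, hnum,
        mul_div_cancel_left₀ _ hne]
    have hRHS : (A * Aᴴ) i j
        = ∑ k ∈ Finset.range m, qq a' k (l i) * (starRingEnd ℂ) (qq a' k (l j)) := by
      simp only [Matrix.mul_apply, Matrix.conjTranspose_apply, hA, Matrix.of_apply]
      rw [← Fin.sum_univ_eq_sum_range (fun n => qq a' n (l i) * (starRingEnd ℂ) (qq a' n (l j)))]
      rfl
    rw [hLHS, hRHS]
  constructor
  · rw [hM]; exact Matrix.posSemidef_self_mul_conjTranspose A
  · rw [hM]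
    exact (Matrix.rank_mul_le_left A Aᴴ).trans (by simpa using A.rank_le_card_width)
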